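/- Let p be a prime, K a field of characteristic p, and D a derivation on K whose p-th iterate is the zero map (D^p = 0). Then for h ∈ K one has D^{p-1}(h) + h^p = 0 if and only if there exists g ∈ K, g ≠ 0, with h = D(g)/g. In other words, the solution set of the homogeneous p-Riccati equation is exactly the set of logarithmic derivatives of nonzero elements of K. -/

import Mathlib

open MvPolynomial

namespace PRic

variable {p : ℕ}

noncomputable def d (p : ℕ) :
    Derivation (ZMod p) (MvPolynomial ℕ (ZMod p)) (MvPolynomial ℕ (ZMod p)) :=
  MvPolynomial.mkDerivation _ (fun i => MvPolynomial.X (i+1))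

@[simp] lemma d_X (i : ℕ) : d p (X i) = X (i+1) := MvPolynomial.mkDerivation_X _ _ _

lemma d_mul (f g : MvPolynomial ℕ (ZMod p)) : d p (f * g) = f * d p g + g * d p f := by
  rw [Derivation.leibniz]; simp [smul_eq_mul]

lemma d_C_mul (a : ZMod p) (g : MvPolynomial ℕ (ZMod p)) : d p (C a * g) = C a * d p g := by
  rw [← smul_eq_C_mul, Derivation.map_smul, smul_eq_C_mul]

noncomputable def U (p : ℕ) : ℕ → MvPolynomial ℕ (ZMod p)
  | 0 => 1
  | n+1 => d p (U p n) + X 0 * U p n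

lemma U_succ (n : ℕ) : U p (n+1) = d p (U p n) + X 0 * U p n := rfl

lemma pd0 (F : MvPolynomial ℕ (ZMod p)) : pderiv 0 (d p F) = d p (pderiv 0 F) := by
  induction F using MvPolynomial.induction_on with
  | C a => simp
  | add f g hf hg => simp [hf, hg]
  | mul_X f j hf =>
    by_cases hj : j = 0
    · subst hj
      simp only [d_mul, d_X, map_add, pderiv_mul, hf, pderiv_X_self,
        pderiv_X_of_ne (show (1:ℕ) ≠ 0 by omega), mul_zero, mul_one, zero_mul, add_zero,
        zero_add, map_zero, Derivation.map_one_eq_zero]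
      ring
    · simp only [d_mul, d_X, map_add, pderiv_mul, hf,
        pderiv_X_of_ne (show j ≠ 0 from hj),
        pderiv_X_of_ne (show j + 1 ≠ 0 by omega), mul_zero, mul_one, zero_mul, add_zero,
        zero_add, map_zero, Derivation.map_one_eq_zero]

lemma pdS (i : ℕ) (F : MvPolynomial ℕ (ZMod p)) :
    pderiv (i+1) (d p F) = d p (pderiv (i+1) F) + pderiv i F := by
  induction F using MvPolynomial.induction_on with
  | C a => simp
  | add f g hf hg =>
    simp only [map_add, hf, hg]; ring
  | mul_X f j hf =>
    by_cases hji : j = i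
    · subst hji
      simp only [d_mul, d_X, map_add, pderiv_mul, hf, pderiv_X_self,
        pderiv_X_of_ne (show j + 1 ≠ j + 1 + 1 by omega),
        pderiv_X_of_ne (show j + 1 ≠ j by omega),
        pderiv_X_of_ne (show j ≠ j + 1 by omega),
        mul_zero, mul_one, zero_mul, add_zero, zero_add, map_zero,
        Derivation.map_one_eq_zero]
      ring
    · by_cases hji1 : j = i + 1
      · subst hji1
        simp only [d_mul, d_X, map_add, pderiv_mul, hf, pderiv_X_self,
          pderiv_X_of_ne (show i + 1 + 1 ≠ i by omega),
          pderiv_X_of_ne (show i + 1 + 1 ≠ i + 1 by omega),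
          pderiv_X_of_ne (show i + 1 ≠ i by omega),
          mul_zero, mul_one, zero_mul, add_zero, zero_add, map_zero,
          Derivation.map_one_eq_zero]
        ring
      · by_cases hji2 : j + 1 = i
        · simp only [d_mul, d_X, map_add, pderiv_mul, hf, hji2, pderiv_X_self,
            pderiv_X_of_ne (show i ≠ i + 1 by omega),
            pderiv_X_of_ne (show j ≠ i + 1 from hji1),
            pderiv_X_of_ne (show j ≠ i from hji),
            pderiv_X_of_ne (show j + 1 ≠ i + 1 by omega),
            mul_zero, mul_one, zero_mul, add_zero, zero_add, map_zero,
            Derivation.map_one_eq_zero]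
          ring
        · simp only [d_mul, d_X, map_add, pderiv_mul, hf,
            pderiv_X_of_ne (show j ≠ i + 1 from hji1),
            pderiv_X_of_ne (show j ≠ i from hji),
            pderiv_X_of_ne (show j + 1 ≠ i + 1 by omega),
            pderiv_X_of_ne (show j + 1 ≠ i from hji2),
            mul_zero, mul_one, zero_mul, add_zero, zero_add, map_zero,
            Derivation.map_one_eq_zero]
          ring

lemma pderiv_U (n i : ℕ) :
    pderiv i (U p n) = C ((n.choose (i+1) : ZMod p)) * U p (n - (i+1)) := by
  induction n generalizing i with
  | zero => simp [U]
  | succ n ih =>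
    cases i with
    | zero =>
      rw [U_succ, map_add, pd0, ih 0, pderiv_mul, pderiv_X_self, one_mul, ih 0, d_C_mul]
      rcases Nat.eq_zero_or_pos n with h0 | h0
      · subst h0; simp [U]
      · have hn : n - 1 + 1 = n := by omega
        have hU : U p n = d p (U p (n-1)) + X 0 * U p (n-1) := by
          rw [← U_succ, hn]
        have hcomb : C ((n.choose 1 : ZMod p)) * d p (U p (n - 1))
            + X 0 * (C ((n.choose 1 : ZMod p)) * U p (n - 1))
            = C ((n.choose 1 : ZMod p)) * U p n := by
          rw [hU]; ring
        have hc : (((n+1).choose 1 : ℕ) : ZMod p) = ((n.choose 1 : ℕ) : ZMod p) + 1 := by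
          rw [Nat.choose_one_right, Nat.choose_one_right]; push_cast; ring
        rw [Nat.add_sub_cancel, hc, C_add, C_1]
        have expand : (C ((n.choose 1 : ZMod p)) + 1) * U p n
            = C ((n.choose 1 : ZMod p)) * U p n + U p n := by ring
        rw [expand, ← hcomb]
        ring
    | succ i' =>
      rw [U_succ, map_add, pdS, ih (i'+1), ih i', pderiv_mul,
        pderiv_X_of_ne (show (0:ℕ) ≠ i'+1 by omega), ih (i'+1), d_C_mul, zero_mul, zero_add]
      have hpascal : (((n+1).choose (i'+2) : ℕ) : ZMod p)
          = ((n.choose (i'+1) : ℕ) : ZMod p) + ((n.choose (i'+2) : ℕ) : ZMod p) := by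
        rw [Nat.choose_succ_succ n (i'+1)]; push_cast; ring
      have hsub2 : n + 1 - (i' + 2) = n - (i' + 1) := by omega
      rw [hsub2, hpascal, C_add]
      rcases le_or_gt n (i'+1) with h | h
      · have ha : n.choose (i'+2) = 0 := Nat.choose_eq_zero_of_lt (by omega)
        rw [ha]
        push_cast
        simp
      · have hsub : n - (i'+2) + 1 = n - (i'+1) := by omega
        have hU : U p (n - (i'+1)) = d p (U p (n-(i'+2))) + X 0 * U p (n-(i'+2)) := by
          rw [← U_succ, hsub]
        have hcomb : C ((n.choose (i'+2) : ZMod p)) * d p (U p (n - (i'+2)))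
            + X 0 * (C ((n.choose (i'+2) : ZMod p)) * U p (n - (i'+2)))
            = C ((n.choose (i'+2) : ZMod p)) * U p (n - (i'+1)) := by
          rw [hU]; ring
        have expand : (C ((n.choose (i'+1) : ZMod p)) + C ((n.choose (i'+2) : ZMod p)))
              * U p (n - (i'+1))
            = C ((n.choose (i'+1) : ZMod p)) * U p (n - (i'+1))
              + C ((n.choose (i'+2) : ZMod p)) * U p (n - (i'+1)) := by ring
        rw [expand, ← hcomb]
        ring


/-! ### coefficient lemma for pderiv -/

lemma coeff_pderiv' (i : ℕ) (m : ℕ →₀ ℕ) (him : m i ≠ 0) (F : MvPolynomial ℕ (ZMod p)) :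
    coeff (m - Finsupp.single i 1) (pderiv i F) = (m i : ZMod p) * coeff m F := by
  induction F using MvPolynomial.induction_on' with
  | add f g hf hg => rw [map_add, coeff_add, coeff_add, hf, hg]; ring
  | monomial s a =>
    rw [pderiv_monomial, coeff_monomial, coeff_monomial]
    by_cases hsm : s = m
    · subst hsm; rw [if_pos rfl, if_pos rfl]; push_cast; ring
    · rw [if_neg hsm, mul_zero]
      by_cases hs0 : s i = 0
      · split
        · rw [hs0]; push_cast; ring
        · rfl
      · have hne : s - Finsupp.single i 1 ≠ m - Finsupp.single i 1 := by
          intro heq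
          apply hsm
          ext j
          have hj := DFunLike.congr_fun heq j
          simp only [Finsupp.tsub_apply, Finsupp.single_apply] at hj
          by_cases hji : i = j
          · subst hji
            simp at hj
            omega
          · simpa [hji] using hj
        rw [if_neg hne]

/-! ### weighted homogeneity -/

/-- weight function: variable `x_i` has weight `i+1`. -/
def w : ℕ → ℕ := fun i => i + 1

lemma weight_single (i k : ℕ) :
    (Finsupp.weight w) (Finsupp.single i k) = k * (i + 1) := by
  rw [Finsupp.weight_apply, Finsupp.sum_single_index]
  · simp [w, mul_comm]
  · simp

lemma weight_sub_single {m : ℕ →₀ ℕ} {i : ℕ} (hmi : m i ≠ 0) :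
    (Finsupp.weight w) (m - Finsupp.single i 1) + (i + 1) = (Finsupp.weight w) m := by
  conv_rhs => rw [← tsub_add_cancel_of_le
    (Finsupp.single_le_iff.mpr (Nat.one_le_iff_ne_zero.mpr hmi))]
  rw [map_add, weight_single, one_mul]

lemma smul_hom {c : ZMod p} {G : MvPolynomial ℕ (ZMod p)} {n : ℕ}
    (hG : G.IsWeightedHomogeneous w n) : (c • G).IsWeightedHomogeneous w n := by
  intro m hm
  apply hG
  intro h0
  rw [coeff_smul, h0, smul_zero] at hm
  exact hm rfl

lemma d_monomial (v : ℕ →₀ ℕ) (r : ZMod p) :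
    d p (monomial v r) = C r * Finsupp.sum v fun i k =>
      monomial (v - Finsupp.single i 1) ((k : ZMod p)) * X (i+1) := by
  have h := MvPolynomial.mkDerivation_monomial (R := ZMod p)
    (A := MvPolynomial ℕ (ZMod p)) (fun i => X (i+1)) v r
  rw [show d p (monomial v r)
      = MvPolynomial.mkDerivation (ZMod p) (fun i => X (i+1)) (monomial v r) from rfl, h,
    smul_eq_C_mul]
  simp only [smul_eq_mul]

lemma d_hom {F : MvPolynomial ℕ (ZMod p)} {n : ℕ} (hF : F.IsWeightedHomogeneous w n) :
    (d p F).IsWeightedHomogeneous w (n + 1) := by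
  conv_lhs => rw [F.as_sum]
  rw [map_sum]
  apply IsWeightedHomogeneous.sum
  intro v hv
  have hvw : (Finsupp.weight w) v = n := hF (mem_support_iff.mp hv)
  rw [d_monomial, ← smul_eq_C_mul]
  apply smul_hom
  rw [Finsupp.sum]
  apply IsWeightedHomogeneous.sum
  intro i hi
  have hmi : v i ≠ 0 := Finsupp.mem_support_iff.mp hi
  have h1 : (Finsupp.weight w) (v - Finsupp.single i 1) + (i + 1) = n := by
    rw [weight_sub_single hmi, hvw]
  have hmul := (isWeightedHomogeneous_monomial w (v - Finsupp.single i 1)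
      ((v i : ZMod p)) rfl).mul (isWeightedHomogeneous_X _ w (i+1))
  have h2 : (Finsupp.weight w) (v - Finsupp.single i 1) + w (i+1) = n + 1 := by
    show _ + (i + 1 + 1) = n + 1
    omega
  rwa [h2] at hmul

lemma U_hom (n : ℕ) : (U p n).IsWeightedHomogeneous w n := by
  induction n with
  | zero => exact isWeightedHomogeneous_one _ _
  | succ n ih =>
    rw [U_succ]
    apply (d_hom ih).add
    have hmul := (isWeightedHomogeneous_X _ w 0).mul ih
    rwa [show w 0 + n = n + 1 from by simp [w, Nat.add_comm]] at hmul

lemma sub_hom {F G : MvPolynomial ℕ (ZMod p)} {n : ℕ}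
    (hF : F.IsWeightedHomogeneous w n) (hG : G.IsWeightedHomogeneous w n) :
    (F - G).IsWeightedHomogeneous w n := by
  intro m hm
  rw [coeff_sub] at hm
  by_cases hc : coeff m F = 0
  · exact hG fun h0 => hm (by rw [hc, h0, sub_zero])
  · exact hF hc

lemma X0_pow_hom (n : ℕ) :
    ((X 0 : MvPolynomial ℕ (ZMod p)) ^ n).IsWeightedHomogeneous w n := by
  induction n with
  | zero => rw [pow_zero]; exact isWeightedHomogeneous_one _ _
  | succ n ih =>
    rw [pow_succ]
    have hmul := ih.mul (isWeightedHomogeneous_X _ w 0)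
    rwa [show n + w 0 = n + 1 from by simp [w]] at hmul

/-! ### basic facts about abstract derivations -/

section DBasics

variable {K : Type*} [CommRing K] (D : K → K)

lemma D_zero (hadd : ∀ u v : K, D (u + v) = D u + D v) : D 0 = 0 := by
  simpa using hadd 0 0

lemma D_one (hleib : ∀ u v : K, D (u * v) = u * D v + v * D u) : D 1 = 0 := by
  simpa using hleib 1 1

lemma D_natCast (hadd : ∀ u v : K, D (u + v) = D u + D v)
    (hleib : ∀ u v : K, D (u * v) = u * D v + v * D u) (n : ℕ) : D (n : K) = 0 := by
  induction n with
  | zero => simpa using D_zero D hadd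
  | succ n ih =>
    rw [Nat.cast_succ, hadd, ih, D_one D hleib, add_zero]

end DBasics

/-! ### transfer -/

section Transfer

variable {K : Type*} [CommRing K] [CharP K p]

lemma transfer (hp : p ≠ 0) (D : K → K)
    (hadd : ∀ u v : K, D (u + v) = D u + D v)
    (hleib : ∀ u v : K, D (u * v) = u * D v + v * D u) (a : K)
    (F : MvPolynomial ℕ (ZMod p)) :
    eval₂ (ZMod.castHom (dvd_refl p) K) (fun i => D^[i] a) (d p F)
      = D (eval₂ (ZMod.castHom (dvd_refl p) K) (fun i => D^[i] a) F) := by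
  haveI : NeZero p := ⟨hp⟩
  induction F using MvPolynomial.induction_on with
  | C r =>
    rw [MvPolynomial.derivation_C, eval₂_zero, eval₂_C]
    obtain ⟨k, rfl⟩ := ZMod.natCast_rightInverse.surjective r
    rw [map_natCast, D_natCast D hadd hleib]
  | add f g hf hg =>
    rw [map_add, eval₂_add, eval₂_add, hf, hg, hadd]
  | mul_X f j hf =>
    rw [d_mul, d_X, eval₂_add, eval₂_mul, eval₂_mul, eval₂_X, eval₂_X, eval₂_mul,
      eval₂_X, hf, hleib, Function.iterate_succ_apply']

end Transfer

/-! ### the universal Hochschild identity -/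

lemma universal (hp : p.Prime) :
    U p p = (X 0 : MvPolynomial ℕ (ZMod p)) ^ p + X (p-1) := by
  haveI : Fact p.Prime := ⟨hp⟩
  have hp2 := hp.two_le
  set F := U p p - ((X 0 : MvPolynomial ℕ (ZMod p)) ^ p + X (p-1)) with hFdef
  have hpder : ∀ i, pderiv i F = 0 := by
    intro i
    rw [hFdef, map_sub, map_add, pderiv_U]
    have hXp : pderiv i ((X 0 : MvPolynomial ℕ (ZMod p)) ^ p) = 0 := by
      rw [pderiv_pow]
      have hcast : ((p : ℕ) : MvPolynomial ℕ (ZMod p)) = 0 :=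
        CharP.cast_eq_zero (MvPolynomial ℕ (ZMod p)) p
      rw [hcast, zero_mul, zero_mul]
    rw [hXp]
    by_cases hi : i + 1 = p
    · have h1 : p.choose (i+1) = 1 := by rw [hi, Nat.choose_self]
      have h2 : p - (i + 1) = 0 := by omega
      have h3 : p - 1 = i := by omega
      rw [h1, h2, h3, pderiv_X_self]
      show C ((1 : ℕ) : ZMod p) * U p 0 - (0 + 1) = 0
      simp [U]
    · have hX1 : pderiv i (X (p-1) : MvPolynomial ℕ (ZMod p)) = 0 :=
        pderiv_X_of_ne (by omega)
      rcases lt_or_gt_of_ne hi with hlt | hgt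
      · have hc0 : ((p.choose (i+1) : ℕ) : ZMod p) = 0 := by
          rw [CharP.cast_eq_zero_iff (ZMod p) p]
          exact Nat.Prime.dvd_choose_self hp (by omega) (by omega)
        rw [hc0, map_zero, zero_mul, hX1]
        ring
      · have hc0 : p.choose (i+1) = 0 := Nat.choose_eq_zero_of_lt (by omega)
        rw [hc0, hX1]
        simp
  have hhom : F.IsWeightedHomogeneous w p := by
    apply sub_hom (U_hom p)
    apply (X0_pow_hom p).add
    have hX := isWeightedHomogeneous_X (ZMod p) w (p-1)
    rwa [show w (p-1) = p from by simp [w]; omega] at hX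
  have hmono : ∀ m : ℕ →₀ ℕ, coeff m F ≠ 0 → m = Finsupp.single 0 p := by
    intro m hm
    have hdvd : ∀ i, p ∣ m i := by
      intro i
      by_cases h0 : m i = 0
      · simp [h0]
      · have hcc := coeff_pderiv' i m h0 F
        rw [hpder i, coeff_zero] at hcc
        rcases mul_eq_zero.mp hcc.symm with hcase | hcase
        · exact (CharP.cast_eq_zero_iff (ZMod p) p _).mp hcase
        · exact absurd hcase hm
    have hw : (Finsupp.weight w) m = p := hhom hm
    have hsupp : m.support ⊆ {0} := by
      intro i hi
      simp only [Finset.mem_singleton]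
      by_contra hne
      have h1 : m i ≠ 0 := Finsupp.mem_support_iff.mp hi
      have h2 : p ≤ m i := Nat.le_of_dvd (Nat.pos_of_ne_zero h1) (hdvd i)
      have h3 : m i * w i ≤ (Finsupp.weight w) m := by
        rw [Finsupp.weight_apply, Finsupp.sum]
        have hle := Finset.single_le_sum (f := fun j => m j • w j)
          (fun j _ => Nat.zero_le _) hi
        simpa [smul_eq_mul] using hle
      have h4 : 2 ≤ w i := by simp [w]; omega
      rw [hw] at h3
      nlinarith
    have hms := Finsupp.support_subset_singleton.mp hsupp
    rw [hms]
    congr 1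
    have hwm : (Finsupp.weight w) m = m 0 := by
      conv_lhs => rw [hms]
      rw [weight_single]
      simp [w]
    omega
  have hFeq : F = monomial (Finsupp.single 0 p) (coeff (Finsupp.single 0 p) F) := by
    apply MvPolynomial.ext
    intro m
    rw [coeff_monomial]
    split
    · rename_i hcond
      rw [hcond]
    · rename_i hcond
      by_contra hc
      exact hcond ((hmono m hc).symm)
  -- evaluate at x₀ = 1, other variables 0 (i.e. D = 0, a = 1 over ZMod p)
  have htriv_add : ∀ u v : ZMod p, (fun _ : ZMod p => (0:ZMod p)) (u+v)
      = (fun _ : ZMod p => (0:ZMod p)) u + (fun _ : ZMod p => (0:ZMod p)) v := by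
    intro u v; simp
  have htriv_leib : ∀ u v : ZMod p, (fun _ : ZMod p => (0:ZMod p)) (u*v)
      = u * (fun _ : ZMod p => (0:ZMod p)) v + v * (fun _ : ZMod p => (0:ZMod p)) u := by
    intro u v; simp
  have hU1 : ∀ n, eval₂ (ZMod.castHom (dvd_refl p) (ZMod p))
      (fun i => (fun _ : ZMod p => (0:ZMod p))^[i] 1) (U p n) = 1 := by
    intro n
    induction n with
    | zero => exact eval₂_one _ _
    | succ n ih =>
      rw [U_succ, eval₂_add, eval₂_mul, eval₂_X,
        transfer hp.ne_zero _ htriv_add htriv_leib 1, ih]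
      simp
  have hv : ∀ i, ((fun _ : ZMod p => (0:ZMod p))^[i] 1) = if i = 0 then 1 else 0 := by
    intro i
    cases i with
    | zero => simp
    | succ n => rw [Function.iterate_succ_apply']; simp
  have heF : eval₂ (ZMod.castHom (dvd_refl p) (ZMod p))
      (fun i => (fun _ : ZMod p => (0:ZMod p))^[i] 1) F = 0 := by
    rw [hFdef, eval₂_sub, eval₂_add, eval₂_pow, eval₂_X, eval₂_X, hU1, hv 0, hv (p-1),
      if_pos rfl, if_neg (by omega : ¬ p - 1 = 0)]
    simp
  have heF2 : eval₂ (ZMod.castHom (dvd_refl p) (ZMod p))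
      (fun i => (fun _ : ZMod p => (0:ZMod p))^[i] 1)
      (monomial (Finsupp.single 0 p) (coeff (Finsupp.single 0 p) F))
      = coeff (Finsupp.single 0 p) F := by
    rw [eval₂_monomial]
    rw [Finsupp.prod_single_index (by simp)]
    rw [hv 0, if_pos rfl, one_pow, mul_one, ZMod.castHom_apply, ZMod.cast_id]
  have hc0 : coeff (Finsupp.single 0 p) F = 0 := by
    rw [← heF2, ← hFeq, heF]
  have hF0 : F = 0 := by rw [hFeq, hc0, map_zero]
  have := sub_eq_zero.mp hF0
  exact this

/-! ### Hochschild's formula -/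

lemma hochschild (hp : p.Prime) {K : Type*} [CommRing K] [CharP K p] (D : K → K)
    (hadd : ∀ u v : K, D (u + v) = D u + D v)
    (hleib : ∀ u v : K, D (u * v) = u * D v + v * D u) (a : K)
    (u : ℕ → K) (hu0 : u 0 = 1) (hurec : ∀ n, u (n+1) = D (u n) + a * u n) :
    u p = a ^ p + D^[p-1] a := by
  have key : ∀ n, eval₂ (ZMod.castHom (dvd_refl p) K) (fun i => D^[i] a) (U p n) = u n := by
    intro n
    induction n with
    | zero => rw [hu0]; exact eval₂_one _ _
    | succ n ih =>
      rw [U_succ, eval₂_add, eval₂_mul, eval₂_X,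
        transfer hp.ne_zero D hadd hleib a, ih, hurec]
      simp
  have hkey := key p
  rw [universal hp, eval₂_add, eval₂_pow, eval₂_X, eval₂_X] at hkey
  simpa using hkey.symm

end PRic

/-! ### the main theorem -/

/-- Let `p` be a prime, `K` a field of characteristic `p`, and `D` a derivation on `K`
(an additive map satisfying the Leibniz rule) with `D^p = 0`. Then `h ∈ K` satisfies the
homogeneous `p`-Riccati equation `D^{p-1}(h) + h^p = 0` if and only if `h` is the
logarithmic derivative `D(g)/g` of some nonzero `g ∈ K`. -/
theorem homogeneous_pRiccati_solutions_eq_logDerivs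
    (p : ℕ) (hp : p.Prime) (K : Type*) [Field K] [CharP K p]
    (D : K → K)
    (hadd : ∀ u v : K, D (u + v) = D u + D v)
    (hleib : ∀ u v : K, D (u * v) = u * D v + v * D u)
    (hDp : ∀ a : K, D^[p] a = 0)
    (h : K) :
    D^[p - 1] h + h ^ p = 0 ↔ ∃ g : K, g ≠ 0 ∧ h = D g / g := by
  classical
  have Dsum : ∀ (s : Finset ℕ) (f : ℕ → K), D (∑ k ∈ s, f k) = ∑ k ∈ s, D (f k) := by
    intro s f
    induction s using Finset.induction_on with
    | empty => simpa using PRic.D_zero D hadd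
    | insert _ _ hx ih => rw [Finset.sum_insert hx, hadd, ih, Finset.sum_insert hx]
  constructor
  · -- Riccati solution ⟹ logarithmic derivative
    intro hR
    by_cases hh : h = 0
    · refine ⟨1, one_ne_zero, ?_⟩
      rw [hh, PRic.D_one D hleib, zero_div]
    · set u : ℕ → K := fun n => Nat.rec (1 : K) (fun _ x => D x + h * x) n with hu
      have hu0 : u 0 = 1 := rfl
      have hurec : ∀ n, u (n+1) = D (u n) + h * u n := fun n => rfl
      have hup : u p = h ^ p + D^[p-1] h := PRic.hochschild hp D hadd hleib h u hu0 hurec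
      have hup0 : u p = 0 := by rw [hup, add_comm]; exact hR
      set T : K → K := fun x => D x + h * x with hT
      have hterm : ∀ (n k : ℕ) (x : K), D ((n.choose k : K) * (u (n-k) * D^[k] x))
          = (n.choose k : K) * (u (n-k) * D^[k+1] x + D^[k] x * D (u (n-k))) := by
        intro n k x
        rw [hleib, PRic.D_natCast D hadd hleib, hleib, Function.iterate_succ_apply']
        ring
      have hTiter : ∀ (n : ℕ) (x : K), T^[n] x
          = ∑ k ∈ Finset.range (n+1), (n.choose k : K) * (u (n-k) * D^[k] x) := by
        intro n
        induction n with
        | zero => intro x; simp [hu0]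
        | succ n ih =>
          intro x
          rw [Function.iterate_succ_apply', ih x]
          show D (∑ k ∈ Finset.range (n+1), (n.choose k : K) * (u (n-k) * D^[k] x))
              + h * ∑ k ∈ Finset.range (n+1), (n.choose k : K) * (u (n-k) * D^[k] x) = _
          have step1 : D (∑ k ∈ Finset.range (n+1), (n.choose k : K) * (u (n-k) * D^[k] x))
                + h * ∑ k ∈ Finset.range (n+1), (n.choose k : K) * (u (n-k) * D^[k] x)
              = (∑ k ∈ Finset.range (n+1), (n.choose k : K) * (u (n-k) * D^[k+1] x))
                + ∑ k ∈ Finset.range (n+1), (n.choose k : K) * (u (n-k+1) * D^[k] x) := by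
            rw [Dsum, Finset.mul_sum, ← Finset.sum_add_distrib, ← Finset.sum_add_distrib]
            apply Finset.sum_congr rfl
            intro k hk
            rw [hterm n k x, hurec (n-k)]
            ring
          rw [step1]
          have hB : (∑ k ∈ Finset.range (n+1), (n.choose k : K) * (u (n-k+1) * D^[k] x))
              = (∑ i ∈ Finset.range n, (n.choose (i+1) : K) * (u (n-i) * D^[i+1] x))
                + u (n+1) * x := by
            rw [Finset.sum_range_succ']
            congr 1
            · apply Finset.sum_congr rfl
              intro i hi
              have hii : n - (i+1) + 1 = n - i := by
                have := Finset.mem_range.mp hi; omega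
              rw [hii]
            · simp
          have hA2 : (∑ i ∈ Finset.range (n+1), (n.choose (i+1) : K) * (u (n-i) * D^[i+1] x))
              = ∑ i ∈ Finset.range n, (n.choose (i+1) : K) * (u (n-i) * D^[i+1] x) := by
            rw [Finset.sum_range_succ, Nat.choose_succ_self, Nat.cast_zero, zero_mul, add_zero]
          rw [Finset.sum_range_succ' _ (n+1)]
          have htgt : ∀ i ∈ Finset.range (n+1),
              (((n+1).choose (i+1) : ℕ) : K) * (u (n+1-(i+1)) * D^[i+1] x)
              = (n.choose i : K) * (u (n-i) * D^[i+1] x)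
                + (n.choose (i+1) : K) * (u (n-i) * D^[i+1] x) := by
            intro i hi
            have h1 : n + 1 - (i+1) = n - i := by omega
            rw [h1, Nat.choose_succ_succ, Nat.cast_add]
            ring
          rw [Finset.sum_congr rfl htgt, Finset.sum_add_distrib]
          rw [hB, ← hA2]
          simp only [Nat.choose_zero_right, Nat.cast_one, one_mul, Nat.sub_zero,
            Function.iterate_zero_apply]
          ring
      have hTp1 : T^[p] 1 = 0 := by
        rw [hTiter p 1]
        apply Finset.sum_eq_zero
        intro k hk
        by_cases hk0 : k = 0
        · rw [hk0]; simp [hup0]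
        · by_cases hkp : k = p
          · rw [hkp]; simp [hDp]
          · have hklt : k < p := by
              have := Finset.mem_range.mp hk; omega
            have hch : ((p.choose k : ℕ) : K) = 0 := by
              rw [CharP.cast_eq_zero_iff K p]
              exact Nat.Prime.dvd_choose_self hp hk0 hklt
            rw [hch, zero_mul]
      have hex : ∃ n, T^[n] 1 = 0 := ⟨p, hTp1⟩
      set N := Nat.find hex with hN
      have hN0 : T^[N] 1 = 0 := Nat.find_spec hex
      have hNpos : N ≠ 0 := by
        intro h0
        rw [h0, Function.iterate_zero_apply] at hN0
        exact one_ne_zero hN0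
      set g0 : K := T^[N-1] 1 with hg0
      have hg0ne : g0 ≠ 0 := Nat.find_min hex (by omega)
      have hTg0 : D g0 + h * g0 = 0 := by
        have hstep : T^[N] 1 = T (T^[N-1] 1) := by
          conv_lhs => rw [show N = (N-1)+1 from by omega]
          rw [Function.iterate_succ_apply']
        rw [hstep] at hN0
        exact hN0
      refine ⟨g0⁻¹, inv_ne_zero hg0ne, ?_⟩
      have hg0inv : g0 * g0⁻¹ = 1 := mul_inv_cancel₀ hg0ne
      have hinv : D (g0⁻¹) = h * g0⁻¹ := by
        have h1 : D (g0 * g0⁻¹) = 0 := by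
          rw [mul_inv_cancel₀ hg0ne, PRic.D_one D hleib]
        rw [hleib] at h1
        have h3 : g0⁻¹ * (h * g0) = h := by
          rw [mul_comm h g0, ← mul_assoc, inv_mul_cancel₀ hg0ne, one_mul]
        have h2 : g0 * D (g0⁻¹) = h := by
          linear_combination h1 + h3 - g0⁻¹ * hTg0
        linear_combination g0⁻¹ * h2 - D (g0⁻¹) * hg0inv
      rw [hinv, mul_div_assoc, div_self (inv_ne_zero hg0ne), mul_one]
  · -- logarithmic derivative ⟹ Riccati solution
    rintro ⟨g, hg, rfl⟩
    set a : K := D g / g with ha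
    have hDg : a * g = D g := by
      rw [ha, div_mul_cancel₀ _ hg]
    set u : ℕ → K := fun n => Nat.rec (1 : K) (fun _ x => D x + a * x) n with hu
    have hu0 : u 0 = 1 := rfl
    have hurec : ∀ n, u (n+1) = D (u n) + a * u n := fun n => rfl
    have hup : u p = a ^ p + D^[p-1] a := PRic.hochschild hp D hadd hleib a u hu0 hurec
    have hiter : ∀ n, D^[n] g = u n * g := by
      intro n
      induction n with
      | zero => simp [hu0]
      | succ n ih =>
        rw [Function.iterate_succ_apply', ih, hleib, hurec]
        rw [← hDg]
        ring
    have h0 : u p * g = 0 := by rw [← hiter p, hDp g]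
    have hup0 : u p = 0 := by
      rcases mul_eq_zero.mp h0 with hc | hc
      · exact hc
      · exact absurd hc hg
    rw [← hup0, hup]
    ring
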